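/- Let a, a* be nonzero scalars in 𝕂 and define 𝕂-linear maps A, A* : V → V by either A = a·y_1^−, A* = a*·y_0^−, or A = a·y_0^+, A* = a*·y_1^+. Assume V has type (1,1), i.e. ε_0 = ε_1 = 1 in its weight space decomposition, and assume there is no subspace W of V with AW ⊆ W, A*W ⊆ W, W ≠ 0, W ≠ V. Then the pair A, A* is a tridiagonal pair on V; its diameter equals the length d of the weight space decomposition of V; the sequence a q^{2i−d} (0 ≤ i ≤ d) is a standard ordering of the eigenvalues of A; and the sequence a* q^{d−2i} (0 ≤ i ≤ d) is a standard ordering of the eigenvalues of A*. -/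

import Mathlib

noncomputable section

open Submodule

variable {K : Type*} [Field K]

/-- `[n]_q = (q^n − q^{−n})/(q − q^{−1})`. -/
def qInt (q : K) (n : ℤ) : K := (q ^ n - q ^ (-n)) / (q - q⁻¹)

/-- Elements `y₀⁺, y₁⁺, y₀⁻, y₁⁻, k₀, k₀⁻¹, k₁, k₁⁻¹` of a unital associative `K`-algebra
satisfy the alternate relations. -/
structure AlternateRelations (q : K) {A : Type*} [Ring A] [Algebra K A]
    (yp ym k kinv : Fin 2 → A) : Prop where
  k_kinv : ∀ i, k i * kinv i = 1
  kinv_k : ∀ i, kinv i * k i = 1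
  central_yp : ∀ i, k 0 * k 1 * yp i = yp i * (k 0 * k 1)
  central_ym : ∀ i, k 0 * k 1 * ym i = ym i * (k 0 * k 1)
  central_k : ∀ i, k 0 * k 1 * k i = k i * (k 0 * k 1)
  central_kinv : ∀ i, k 0 * k 1 * kinv i = kinv i * (k 0 * k 1)
  rel_yp_k : ∀ i, (q - q⁻¹)⁻¹ • (q • (yp i * k i) - q⁻¹ • (k i * yp i)) = 1
  rel_k_ym : ∀ i, (q - q⁻¹)⁻¹ • (q • (k i * ym i) - q⁻¹ • (ym i * k i)) = 1
  rel_ym_yp : ∀ i, (q - q⁻¹)⁻¹ • (q • (ym i * yp i) - q⁻¹ • (yp i * ym i)) = 1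
  rel_yp_ym : ∀ i j, i ≠ j →
    (q - q⁻¹)⁻¹ • (q • (yp i * ym j) - q⁻¹ • (ym j * yp i)) = kinv 0 * kinv 1
  serre_p : ∀ i j, i ≠ j →
    yp i ^ 3 * yp j - qInt q 3 • (yp i ^ 2 * yp j * yp i)
      + qInt q 3 • (yp i * yp j * yp i ^ 2) - yp j * yp i ^ 3 = 0
  serre_m : ∀ i j, i ≠ j →
    ym i ^ 3 * ym j - qInt q 3 • (ym i ^ 2 * ym j * ym i)
      + qInt q 3 • (ym i * ym j * ym i ^ 2) - ym j * ym i ^ 3 = 0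

/-- Elements `e₀⁺, e₁⁺, e₀⁻, e₁⁻, K₀, K₀⁻¹, K₁, K₁⁻¹` of a unital associative `K`-algebra
satisfy the Chevalley relations of `U_q(sl₂ hat)`. -/
structure ChevalleyRelations (q : K) {A : Type*} [Ring A] [Algebra K A]
    (ep em Kg Kginv : Fin 2 → A) : Prop where
  K_Kinv : ∀ i, Kg i * Kginv i = 1
  Kinv_K : ∀ i, Kginv i * Kg i = 1
  K_comm : Kg 0 * Kg 1 = Kg 1 * Kg 0
  KepK_same : ∀ i, Kg i * ep i * Kginv i = (q ^ (2 : ℤ)) • ep i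
  KemK_same : ∀ i, Kg i * em i * Kginv i = (q ^ (-2 : ℤ)) • em i
  KepK_diff : ∀ i j, i ≠ j → Kg i * ep j * Kginv i = (q ^ (-2 : ℤ)) • ep j
  KemK_diff : ∀ i j, i ≠ j → Kg i * em j * Kginv i = (q ^ (2 : ℤ)) • em j
  e_comm_same : ∀ i, ep i * em i - em i * ep i = (q - q⁻¹)⁻¹ • (Kg i - Kginv i)
  e_comm_diff : ∀ i j, i ≠ j → ep i * em j = em j * ep i
  serre_p : ∀ i j, i ≠ j →
    ep i ^ 3 * ep j - qInt q 3 • (ep i ^ 2 * ep j * ep i)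
      + qInt q 3 • (ep i * ep j * ep i ^ 2) - ep j * ep i ^ 3 = 0
  serre_m : ∀ i j, i ≠ j →
    em i ^ 3 * em j - qInt q 3 • (em i ^ 2 * em j * em i)
      + qInt q 3 • (em i * em j * em i ^ 2) - em j * em i ^ 3 = 0

variable {V : Type*} [AddCommGroup V] [Module K V]

/-- A decomposition of `V` of length `d`: nonzero subspaces `U 0, …, U d`
(indexed by `ℤ`, with `U i = ⊥` outside `[0, d]`) whose direct sum is `V`. -/
structure IsDecomposition (d : ℕ) (U : ℤ → Submodule K V) : Prop where
  bot_of_lt : ∀ i : ℤ, i < 0 → U i = ⊥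
  bot_of_gt : ∀ i : ℤ, (d : ℤ) < i → U i = ⊥
  ne_bot : ∀ i : ℤ, 0 ≤ i → i ≤ (d : ℤ) → U i ≠ ⊥
  indep : iSupIndep U
  sup_eq_top : ⨆ i, U i = ⊤

/-- `A, A*` is a tridiagonal pair on `V` with standard orderings `Vs 0, …, Vs d` and
`Vs' 0, …, Vs' d` of the eigenspaces of `A` resp. `A*`, with corresponding eigenvalues
`θ i` resp. `θ' i`. -/
structure IsTridiagonalPair (A A' : Module.End K V) (d : ℕ)
    (Vs Vs' : ℤ → Submodule K V) (θ θ' : ℤ → K) : Prop where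
  decompV : IsDecomposition d Vs
  decompV' : IsDecomposition d Vs'
  eig : ∀ i : ℤ, ∀ v ∈ Vs i, A v = θ i • v
  eig' : ∀ i : ℤ, ∀ v ∈ Vs' i, A' v = θ' i • v
  theta_inj : ∀ i j : ℤ, 0 ≤ i → i ≤ (d : ℤ) → 0 ≤ j → j ≤ (d : ℤ) → θ i = θ j → i = j
  theta'_inj : ∀ i j : ℤ, 0 ≤ i → i ≤ (d : ℤ) → 0 ≤ j → j ≤ (d : ℤ) → θ' i = θ' j → i = j
  trid : ∀ i : ℤ, (Vs i).map A' ≤ Vs (i - 1) ⊔ Vs i ⊔ Vs (i + 1)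
  trid' : ∀ i : ℤ, (Vs' i).map A ≤ Vs' (i - 1) ⊔ Vs' i ⊔ Vs' (i + 1)
  irred : ∀ W : Submodule K V, W.map A ≤ W → W.map A' ≤ W → W = ⊥ ∨ W = ⊤

/-- The sum `U m + U (m+1) + ⋯ + U n`. -/
def sumIcc (U : ℤ → Submodule K V) (m n : ℤ) : Submodule K V :=
  ⨆ j ∈ Set.Icc m n, U j

/-- Decomposition `[0D]`: the `i`-th subspace is `V_i`. -/
def dec0D (Vs : ℤ → Submodule K V) : ℤ → Submodule K V := Vs

/-- Decomposition `[0*D*]`: the `i`-th subspace is `V*_i`. -/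
def dec0sDs (Vs' : ℤ → Submodule K V) : ℤ → Submodule K V := Vs'

/-- Decomposition `[0*D]`: the `i`-th subspace is `(V*_0+⋯+V*_i) ∩ (V_i+⋯+V_d)`. -/
def dec0sD (d : ℕ) (Vs Vs' : ℤ → Submodule K V) (i : ℤ) : Submodule K V :=
  sumIcc Vs' 0 i ⊓ sumIcc Vs i (d : ℤ)

/-- Decomposition `[0*0]`: the `i`-th subspace is `(V*_0+⋯+V*_i) ∩ (V_0+⋯+V_{d−i})`. -/
def dec0s0 (d : ℕ) (Vs Vs' : ℤ → Submodule K V) (i : ℤ) : Submodule K V :=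
  sumIcc Vs' 0 i ⊓ sumIcc Vs 0 ((d : ℤ) - i)

/-- Decomposition `[D*0]`: the `i`-th subspace is `(V*_{d−i}+⋯+V*_d) ∩ (V_0+⋯+V_{d−i})`. -/
def decDs0 (d : ℕ) (Vs Vs' : ℤ → Submodule K V) (i : ℤ) : Submodule K V :=
  sumIcc Vs' ((d : ℤ) - i) (d : ℤ) ⊓ sumIcc Vs 0 ((d : ℤ) - i)

/-- Decomposition `[D*D]`: the `i`-th subspace is `(V*_{d−i}+⋯+V*_d) ∩ (V_i+⋯+V_d)`. -/
def decDsD (d : ℕ) (Vs Vs' : ℤ → Submodule K V) (i : ℤ) : Submodule K V :=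
  sumIcc Vs' ((d : ℤ) - i) (d : ℤ) ⊓ sumIcc Vs i (d : ℤ)

/-! ### Auxiliary machinery -/

section Aux

open Polynomial

/-- If a product of distinct linear factors annihilates `v`, then `v` lies in the
supremum of the corresponding kernels. -/
lemma mem_biSup_ker_of_aeval_prod {ι : Type*} [DecidableEq ι] (M : Module.End K V)
    (c : ι → K) (s : Finset ι) :
    (∀ i ∈ s, ∀ j ∈ s, c i = c j → i = j) → ∀ v : V,
      Polynomial.aeval M (∏ i ∈ s, (X - C (c i))) v = 0 →
      v ∈ ⨆ i ∈ s, LinearMap.ker (M - c i • (1 : Module.End K V)) := by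
  induction s using Finset.cons_induction with
  | empty =>
      intro _ v hv
      simp only [Finset.prod_empty, map_one, Module.End.one_apply] at hv
      simp [hv]
  | cons i0 s hi0 ih =>
      intro hc v hv
      have hcs : ∀ i ∈ s, ∀ j ∈ s, c i = c j → i = j := fun i hi j hj hij =>
        hc i (Finset.mem_cons_of_mem hi) j (Finset.mem_cons_of_mem hj) hij
      set p : K[X] := ∏ i ∈ s, (X - C (c i)) with hp
      have hpa : p.eval (c i0) ≠ 0 := by
        rw [hp, Polynomial.eval_prod]
        refine Finset.prod_ne_zero_iff.mpr fun j hj => ?_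
        simp only [eval_sub, eval_X, eval_C, sub_ne_zero]
        intro hcc
        exact hi0 ((hc i0 (Finset.mem_cons_self _ _) j (Finset.mem_cons_of_mem hj) hcc) ▸ hj)
      obtain ⟨sq, hsq⟩ := Polynomial.X_sub_C_dvd_sub_C_eval (a := c i0) (p := p)
      have hprod : (∏ i ∈ Finset.cons i0 s hi0, (X - C (c i))) = (X - C (c i0)) * p := by
        rw [Finset.prod_cons]
      have hXC : (Polynomial.aeval M) (X - C (c i0)) = M - c i0 • (1 : Module.End K V) := by
        simp [Algebra.algebraMap_eq_smul_one]
      have hw1 : (Polynomial.aeval M p) v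
          ∈ LinearMap.ker (M - c i0 • (1 : Module.End K V)) := by
        rw [LinearMap.mem_ker, ← hXC, ← Module.End.mul_apply, ← map_mul, ← hprod]
        exact hv
      set u : V := (Polynomial.aeval M ((X - C (c i0)) * sq)) v with hu
      have hpu : (Polynomial.aeval M p) u = 0 := by
        have h1 : p * ((X - C (c i0)) * sq) = sq * ((X - C (c i0)) * p) := by ring
        have h2 : (Polynomial.aeval M p) u
            = (Polynomial.aeval M (sq * ((X - C (c i0)) * p))) v := by
          rw [hu, ← Module.End.mul_apply, ← map_mul, h1]
        rw [h2, ← hprod, map_mul, Module.End.mul_apply, hv, map_zero]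
      have hdecomp : v = (p.eval (c i0))⁻¹ • ((Polynomial.aeval M p) v)
          - (p.eval (c i0))⁻¹ • u := by
        have h2 : p = C (p.eval (c i0)) + (X - C (c i0)) * sq := by
          rw [← hsq]; ring
        have h3 : (Polynomial.aeval M p) v = (p.eval (c i0)) • v + u := by
          conv_lhs => rw [h2]
          rw [map_add, LinearMap.add_apply, aeval_C, Module.algebraMap_end_apply, hu]
        rw [h3, smul_add, smul_smul, inv_mul_cancel₀ hpa, one_smul]
        abel
      have hus : u ∈ ⨆ i ∈ s, LinearMap.ker (M - c i • (1 : Module.End K V)) :=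
        ih hcs u hpu
      have hfin : (⨆ i ∈ Finset.cons i0 s hi0,
            LinearMap.ker (M - c i • (1 : Module.End K V)))
          = LinearMap.ker (M - c i0 • (1 : Module.End K V))
            ⊔ ⨆ i ∈ s, LinearMap.ker (M - c i • (1 : Module.End K V)) := by
        rw [Finset.cons_eq_insert, Finset.iSup_insert]
      rw [hfin, hdecomp]
      exact sub_mem (Submodule.mem_sup_left (Submodule.smul_mem _ _ hw1))
        (Submodule.mem_sup_right (Submodule.smul_mem _ _ hus))

/-- The filtration `⨆ m ≥ j, W m`. -/
def auxFil (W : ℤ → Submodule K V) (j : ℤ) : Submodule K V :=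
  ⨆ m, ⨆ (_ : j ≤ m), W m

lemma le_auxFil (W : ℤ → Submodule K V) {j m : ℤ} (hm : j ≤ m) : W m ≤ auxFil W j :=
  le_iSup_of_le m (le_iSup_of_le hm le_rfl)

lemma auxFil_top {d : ℕ} {W : ℤ → Submodule K V} (hW : IsDecomposition d W)
    {j : ℤ} (hj : j ≤ 0) : auxFil W j = ⊤ := by
  rw [eq_top_iff, ← hW.sup_eq_top]
  refine iSup_le fun m => ?_
  rcases le_or_gt j m with hm | hm
  · exact le_auxFil W hm
  · rw [hW.bot_of_lt m (by omega)]; exact bot_le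

lemma auxFil_bot {d : ℕ} {W : ℤ → Submodule K V} (hW : IsDecomposition d W)
    {j : ℤ} (hj : (d : ℤ) < j) : auxFil W j = ⊥ := by
  rw [eq_bot_iff]
  refine iSup_le fun m => iSup_le fun hm => ?_
  rw [hW.bot_of_gt m (by omega)]

lemma auxFil_induction {W : ℤ → Submodule K V} {j : ℤ} {Cp : V → Prop} {v : V}
    (hv : v ∈ auxFil W j)
    (hmem : ∀ m, j ≤ m → ∀ x ∈ W m, Cp x) (h0 : Cp 0)
    (hadd : ∀ x y, Cp x → Cp y → Cp (x + y)) : Cp v := by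
  rw [auxFil, iSup_subtype'] at hv
  exact Submodule.iSup_induction (motive := Cp) _ hv (fun i x hx => hmem i.1 i.2 x hx) h0 hadd

variable {M : Module.End K V} {W : ℤ → Submodule K V} {μ : ℤ → K}

lemma auxFil_map_le (hraise : ∀ i, ∀ v ∈ W i, M v - μ i • v ∈ W (i + 1)) (j : ℤ)
    {v : V} (hv : v ∈ auxFil W j) : M v ∈ auxFil W j := by
  refine auxFil_induction (Cp := fun x => M x ∈ auxFil W j) hv ?_ (by simp) ?_
  · intro m hm x hx
    have h1 : M x - μ m • x ∈ W (m + 1) := hraise m x hx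
    have h2 : M x = (M x - μ m • x) + μ m • x := by abel
    rw [h2]
    exact add_mem (le_auxFil W (by omega) h1)
      (Submodule.smul_mem _ _ (le_auxFil W hm hx))
  · intro x y hx hy; rw [map_add]; exact add_mem hx hy

lemma auxFil_step (hraise : ∀ i, ∀ v ∈ W i, M v - μ i • v ∈ W (i + 1)) (r : ℤ)
    {v : V} (hv : v ∈ auxFil W r) : M v - μ r • v ∈ auxFil W (r + 1) := by
  refine auxFil_induction (Cp := fun x => M x - μ r • x ∈ auxFil W (r + 1)) hv ?_ (by simp) ?_
  · intro m hm x hx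
    have h1 : M x - μ m • x ∈ W (m + 1) := hraise m x hx
    have key : M x - μ r • x = (M x - μ m • x) + (μ m - μ r) • x := by
      rw [sub_smul]; abel
    rw [key]
    refine add_mem (le_auxFil W (by omega) h1) ?_
    rcases eq_or_lt_of_le hm with rfl | hlt
    · simp
    · exact Submodule.smul_mem _ _ (le_auxFil W (by omega) hx)
  · intro x y hx hy
    have h2 : M (x + y) - μ r • (x + y) = (M x - μ r • x) + (M y - μ r • y) := by
      rw [map_add, smul_add]; abel
    rw [h2]; exact add_mem hx hy

lemma aeval_prod_mem_auxFil {d : ℕ} (hW : IsDecomposition d W)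
    (hraise : ∀ i, ∀ v ∈ W i, M v - μ i • v ∈ W (i + 1)) (n : ℕ) (v : V) :
    (Polynomial.aeval M (∏ i ∈ Finset.range (n + 1), (X - C (μ (i : ℤ))))) v
      ∈ auxFil W ((n : ℤ) + 1) := by
  induction n generalizing v with
  | zero =>
      have h0 : v ∈ auxFil W 0 := by rw [auxFil_top hW le_rfl]; trivial
      have := auxFil_step hraise 0 h0
      simpa [Algebra.algebraMap_eq_smul_one] using this
  | succ n ihn =>
      have hsplit : (∏ i ∈ Finset.range (n + 1 + 1), (X - C (μ (i : ℤ))))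
          = (X - C (μ ((n : ℤ) + 1))) * ∏ i ∈ Finset.range (n + 1), (X - C (μ (i : ℤ))) := by
        rw [Finset.prod_range_succ, mul_comm]
        norm_num
      rw [hsplit, map_mul, Module.End.mul_apply]
      have hmem := ihn v
      have hstep := auxFil_step hraise ((n : ℤ) + 1) hmem
      have hcast : ((n : ℤ) + 1 + 1) = (((n + 1 : ℕ) : ℤ) + 1) := by push_cast; ring
      rw [hcast] at hstep
      simpa [Algebra.algebraMap_eq_smul_one] using hstep

lemma aeval_prod_eq_zero {d : ℕ} (hW : IsDecomposition d W)
    (hraise : ∀ i, ∀ v ∈ W i, M v - μ i • v ∈ W (i + 1)) :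
    Polynomial.aeval M (∏ i ∈ Finset.range (d + 1), (X - C (μ (i : ℤ)))) = 0 := by
  ext v
  have h1 := aeval_prod_mem_auxFil hW hraise d v
  rw [auxFil_bot hW (by omega)] at h1
  simpa using h1

lemma ker_ne_bot_of_decomp {d : ℕ} (hW : IsDecomposition d W)
    (hraise : ∀ i, ∀ v ∈ W i, M v - μ i • v ∈ W (i + 1))
    (hμ : Function.Injective μ) {i : ℤ} (h0 : 0 ≤ i) (hd : i ≤ (d : ℤ)) :
    LinearMap.ker (M - μ i • (1 : Module.End K V)) ≠ ⊥ := by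
  obtain ⟨v₀, hv₀, hv₀ne⟩ := (Submodule.ne_bot_iff _).mp (hW.ne_bot i h0 hd)
  have claim : ∀ s : Finset ℕ, (∀ j ∈ s, (j : ℤ) ≠ i) →
      ∃ f ∈ auxFil W (i + 1),
        (Polynomial.aeval M (∏ j ∈ s, (X - C (μ (j : ℤ))))) v₀
          = (∏ j ∈ s, (μ i - μ (j : ℤ))) • v₀ + f := by
    intro s
    induction s using Finset.cons_induction with
    | empty => intro _; exact ⟨0, zero_mem _, by simp⟩
    | cons j0 s hj0 ih =>
        intro hs
        obtain ⟨f, hf, heq⟩ := ih (fun j hj => hs j (Finset.mem_cons_of_mem hj))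
        refine ⟨(∏ j ∈ s, (μ i - μ (j : ℤ))) • (M v₀ - μ i • v₀)
            + (M f - μ (j0 : ℤ) • f), ?_, ?_⟩
        · refine add_mem (Submodule.smul_mem _ _ (le_auxFil W le_rfl (hraise i v₀ hv₀))) ?_
          exact sub_mem (auxFil_map_le hraise (i + 1) hf) (Submodule.smul_mem _ _ hf)
        · rw [Finset.prod_cons, Finset.prod_cons, map_mul, Module.End.mul_apply, heq]
          have hXC : (Polynomial.aeval M) (X - C (μ (j0 : ℤ)))
              = M - μ (j0 : ℤ) • (1 : Module.End K V) := by
            simp [Algebra.algebraMap_eq_smul_one]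
          rw [hXC]
          simp only [LinearMap.sub_apply, LinearMap.smul_apply, Module.End.one_apply,
            map_add, map_smul]
          module
  obtain ⟨f, hf, heq⟩ := claim ((Finset.range (d + 1)).erase i.toNat) (by
    intro j hj hji
    exact Finset.ne_of_mem_erase hj (by omega))
  set Cs := ∏ j ∈ (Finset.range (d + 1)).erase i.toNat, (μ i - μ (j : ℤ)) with hCsdef
  have hCs : Cs ≠ 0 := by
    refine Finset.prod_ne_zero_iff.mpr fun j hj => sub_ne_zero.mpr fun hcc => ?_
    have := hμ hcc
    exact Finset.ne_of_mem_erase hj (by omega)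
  set u : V := (Polynomial.aeval M (∏ j ∈ (Finset.range (d + 1)).erase i.toNat,
    (X - C (μ (j : ℤ))))) v₀ with hudef
  have hmem_range : i.toNat ∈ Finset.range (d + 1) := by
    simp only [Finset.mem_range]; omega
  have hker : u ∈ LinearMap.ker (M - μ i • (1 : Module.End K V)) := by
    rw [LinearMap.mem_ker]
    have hXC : (Polynomial.aeval M) (X - C (μ i))
        = M - μ i • (1 : Module.End K V) := by
      simp [Algebra.algebraMap_eq_smul_one]
    have hcast : ((i.toNat : ℤ)) = i := Int.toNat_of_nonneg h0
    have hmul : (X - C (μ i)) * ∏ j ∈ (Finset.range (d + 1)).erase i.toNat, (X - C (μ (j : ℤ)))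
        = ∏ j ∈ Finset.range (d + 1), (X - C (μ (j : ℤ))) := by
      have h5 := Finset.mul_prod_erase (Finset.range (d + 1))
        (fun j : ℕ => (X - C (μ (j : ℤ)))) hmem_range
      simpa only [hcast] using h5
    have h2 : (M - μ i • (1 : Module.End K V)) u
        = (Polynomial.aeval M (∏ j ∈ Finset.range (d + 1), (X - C (μ (j : ℤ))))) v₀ := by
      rw [hudef, ← hXC, ← Module.End.mul_apply, ← map_mul, hmul]
    rw [h2, aeval_prod_eq_zero hW hraise]
    rfl
  have hune : u ≠ 0 := by
    intro hu0
    have hCv : Cs • v₀ = -f := by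
      have h3 : Cs • v₀ + f = 0 := by rw [← heq, hu0]
      exact eq_neg_of_add_eq_zero_left h3
    have hmemWi : Cs • v₀ ∈ W i := Submodule.smul_mem _ _ hv₀
    have hmemF : Cs • v₀ ∈ auxFil W (i + 1) := by rw [hCv]; exact neg_mem hf
    have hdis : Disjoint (W i) (auxFil W (i + 1)) := by
      refine (hW.indep i).mono_right ?_
      refine iSup_le fun m => iSup_le fun hm => ?_
      exact le_iSup_of_le m (le_iSup_of_le (by omega : m ≠ i) le_rfl)
    have h4 := Submodule.disjoint_def.mp hdis _ hmemWi hmemF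
    rcases smul_eq_zero.mp h4 with h5 | h5
    · exact hCs h5
    · exact hv₀ne h5
  intro hbot
  rw [hbot] at hker
  exact hune (Submodule.mem_bot K |>.mp hker)

end Aux

section Aux2

open Polynomial

variable {M : Module.End K V} {W : ℤ → Submodule K V} {μ : ℤ → K}

/-- Packaging: a triangular (raising) operator w.r.t. a decomposition yields an
eigenspace decomposition. -/
lemma pkg {d : ℕ} (hW : IsDecomposition d W)
    (hraise : ∀ i, ∀ v ∈ W i, M v - μ i • v ∈ W (i + 1))
    (hμ : Function.Injective μ) :
    IsDecomposition d (fun i => LinearMap.ker (M - μ i • (1 : Module.End K V))) := by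
  have hbig := aeval_prod_eq_zero hW hraise
  have hout : ∀ j : ℤ, (j < 0 ∨ (d : ℤ) < j) →
      LinearMap.ker (M - μ j • (1 : Module.End K V)) = ⊥ := by
    intro j hj
    rw [eq_bot_iff]
    intro v hv
    rcases eq_or_ne v 0 with rfl | hne
    · exact Submodule.zero_mem _
    · exfalso
      have hMv : M v = μ j • v := by
        have := LinearMap.mem_ker.mp hv
        rw [LinearMap.sub_apply, LinearMap.smul_apply, Module.End.one_apply, sub_eq_zero] at this
        exact this
      have hev : M.HasEigenvector (μ j) v := ⟨Module.End.mem_eigenspace_iff.mpr hMv, hne⟩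
      have h0 := Module.End.aeval_apply_of_hasEigenvector
        (p := ∏ i ∈ Finset.range (d + 1), (X - C (μ (i : ℤ)))) hev
      rw [hbig] at h0
      have heval : (∏ i ∈ Finset.range (d + 1), (X - C (μ (i : ℤ)))).eval (μ j) ≠ 0 := by
        rw [Polynomial.eval_prod]
        refine Finset.prod_ne_zero_iff.mpr fun n hn => ?_
        simp only [eval_sub, eval_X, eval_C, sub_ne_zero]
        intro hcc
        have h6 := hμ hcc
        have h7 := Finset.mem_range.mp hn
        omega
      have : (∏ i ∈ Finset.range (d + 1), (X - C (μ (i : ℤ)))).eval (μ j) • v = 0 := by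
        rw [← h0]; rfl
      rcases smul_eq_zero.mp this with h5 | h5
      · exact heval h5
      · exact hne h5
  refine ⟨fun j hj => hout j (Or.inl hj), fun j hj => hout j (Or.inr hj),
    fun i h0 hd => ker_ne_bot_of_decomp hW hraise hμ h0 hd, ?_, ?_⟩
  · have h1 := (Module.End.eigenspaces_iSupIndep M).comp hμ
    have h2 : (Module.End.eigenspace M ∘ μ)
        = fun i => LinearMap.ker (M - μ i • (1 : Module.End K V)) := by
      funext i
      exact Module.End.eigenspace_def
    rwa [h2] at h1
  · rw [eq_top_iff]
    intro v _
    have hv0 : (Polynomial.aeval M (∏ i ∈ Finset.range (d + 1), (X - C (μ (i : ℤ))))) v = 0 := by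
      rw [hbig]; rfl
    have hmem := mem_biSup_ker_of_aeval_prod M (fun n : ℕ => μ (n : ℤ))
      (Finset.range (d + 1)) (fun i _ j _ hij => by have := hμ hij; omega) v hv0
    have hle : (⨆ n ∈ Finset.range (d + 1),
          LinearMap.ker (M - μ (n : ℤ) • (1 : Module.End K V)))
        ≤ ⨆ i : ℤ, LinearMap.ker (M - μ i • (1 : Module.End K V)) :=
      iSup₂_le fun n _ => le_iSup
        (fun i : ℤ => LinearMap.ker (M - μ i • (1 : Module.End K V))) (n : ℤ)
    exact hle hmem

lemma IsDecomposition.relabel {d : ℕ} {P : ℤ → Submodule K V} (hP : IsDecomposition d P) :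
    IsDecomposition d (fun i => P ((d : ℤ) - i)) := by
  refine ⟨fun i hi => hP.bot_of_gt _ (by omega), fun i hi => hP.bot_of_lt _ (by omega),
    fun i h0 hd => hP.ne_bot _ (by omega) (by omega), ?_, ?_⟩
  · exact hP.indep.comp (fun x y hxy => by omega)
  · rw [← hP.sup_eq_top]
    refine le_antisymm (iSup_le fun i => le_iSup P _) (iSup_le fun i => ?_)
    exact le_iSup_of_le ((d : ℤ) - i) (le_of_eq (by rw [sub_sub_cancel]))

/-- If `V` decomposes into subspaces on which `k` acts by distinct scalars, the
eigenspaces of `k` are exactly those subspaces. -/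
lemma ker_eq_of_decomp {k : Module.End K V} {d : ℕ} {U : ℤ → Submodule K V}
    (hU : IsDecomposition d U) {c : ℤ → K} (hc : Function.Injective c)
    (hk : ∀ i : ℤ, ∀ v ∈ U i, k v = c i • v) (j : ℤ) :
    LinearMap.ker (k - c j • (1 : Module.End K V)) = U j := by
  have hle : ∀ m, U m ≤ LinearMap.ker (k - c m • (1 : Module.End K V)) := by
    intro m v hv
    rw [LinearMap.mem_ker, LinearMap.sub_apply, LinearMap.smul_apply, Module.End.one_apply,
      sub_eq_zero]
    exact hk m v hv
  refine le_antisymm ?_ (hle j)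
  set Q := fun m : ℤ => LinearMap.ker (k - c m • (1 : Module.End K V)) with hQdef
  have hQind : iSupIndep Q := by
    have h1 := (Module.End.eigenspaces_iSupIndep k).comp hc
    have h2 : (Module.End.eigenspace k ∘ c) = Q := by
      funext i; exact Module.End.eigenspace_def
    rwa [h2] at h1
  have htop : (⊤ : Submodule K V) ≤ U j ⊔ ⨆ m, ⨆ (_ : m ≠ j), Q m := by
    rw [← hU.sup_eq_top]
    refine iSup_le fun m => ?_
    rcases eq_or_ne m j with rfl | hm
    · exact le_sup_left
    · exact le_trans (hle m) (le_sup_of_le_right (le_iSup_of_le m (le_iSup_of_le hm le_rfl)))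
  have h1 : Q j ≤ (U j ⊔ ⨆ m, ⨆ (_ : m ≠ j), Q m) ⊓ Q j :=
    le_inf (le_trans le_top htop) le_rfl
  have h2 : (U j ⊔ ⨆ m, ⨆ (_ : m ≠ j), Q m) ⊓ Q j
      = U j ⊔ ((⨆ m, ⨆ (_ : m ≠ j), Q m) ⊓ Q j) :=
    sup_inf_assoc_of_le _ (hle j)
  have h3 : (⨆ m, ⨆ (_ : m ≠ j), Q m) ⊓ Q j = ⊥ := by
    rw [inf_comm]
    exact disjoint_iff.mp (hQind j)
  calc Q j ≤ (U j ⊔ ⨆ m, ⨆ (_ : m ≠ j), Q m) ⊓ Q j := h1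
    _ = U j := by rw [h2, h3, sup_bot_eq]

/-- Weight shift lemma. -/
lemma weight_shift {k y : Module.End K V} {v : V} {e β γ δ : K}
    (hky : k (y v) = e • y v + β • v) (hkv : k v = γ • v)
    (hβ : β = δ * (γ - e)) :
    k (y v - δ • v) = e • (y v - δ • v) := by
  rw [map_sub, map_smul, hky, hkv, hβ]
  match_scalars
  · ring
  · ring

/-- Scaling the `q`-Serre relation. -/
lemma serre_smul {X Y : Module.End K V} {c3 b b' : K}
    (h : X ^ 3 * Y - c3 • (X ^ 2 * Y * X) + c3 • (X * Y * X ^ 2) - Y * X ^ 3 = 0) :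
    (b • X) ^ 3 * (b' • Y) - c3 • ((b • X) ^ 2 * (b' • Y) * (b • X))
      + c3 • ((b • X) * (b' • Y) * (b • X) ^ 2) - (b' • Y) * (b • X) ^ 3 = 0 := by
  have hkey : (b • X) ^ 3 * (b' • Y) - c3 • ((b • X) ^ 2 * (b' • Y) * (b • X))
      + c3 • ((b • X) * (b' • Y) * (b • X) ^ 2) - (b' • Y) * (b • X) ^ 3
      = (b ^ 3 * b') • (X ^ 3 * Y - c3 • (X ^ 2 * Y * X) + c3 • (X * Y * X ^ 2) - Y * X ^ 3) := by
    simp only [_root_.smul_pow, smul_mul_assoc, mul_smul_comm, smul_smul, smul_sub, smul_add]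
    match_scalars <;> ring
  rw [hkey, h, smul_zero]

/-- Tridiagonality from the `q`-Serre relation. -/
lemma trid_of_serre {M M' : Module.End K V} {c3 : K} {θ : ℤ → K} (i : ℤ)
    (hser : M ^ 3 * M' - c3 • (M ^ 2 * M' * M) + c3 • (M * M' * M ^ 2) - M' * M ^ 3 = 0)
    (h1 : θ (i - 1) + θ (i + 1) = (c3 - 1) * θ i)
    (h2 : θ (i - 1) * θ (i + 1) = θ i ^ 2)
    (e01 : θ (i - 1) ≠ θ i) (e02 : θ (i - 1) ≠ θ (i + 1)) (e12 : θ i ≠ θ (i + 1)) :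
    Submodule.map M' (LinearMap.ker (M - θ i • (1 : Module.End K V)))
      ≤ LinearMap.ker (M - θ (i - 1) • (1 : Module.End K V))
        ⊔ LinearMap.ker (M - θ i • (1 : Module.End K V))
        ⊔ LinearMap.ker (M - θ (i + 1) • (1 : Module.End K V)) := by
  rintro x ⟨v, hv, rfl⟩
  have hv' : M v = θ i • v := by
    have := LinearMap.mem_ker.mp hv
    rwa [LinearMap.sub_apply, LinearMap.smul_apply, Module.End.one_apply, sub_eq_zero] at this
  have hser' := LinearMap.ext_iff.mp hser v
  simp only [LinearMap.sub_apply, LinearMap.add_apply, LinearMap.smul_apply,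
    Module.End.mul_apply, LinearMap.zero_apply, pow_succ, pow_zero, one_mul,
    Module.End.one_apply, map_smul, hv', smul_smul] at hser'
  have hXC : ∀ c : K, (Polynomial.aeval M) (X - C c) = M - c • (1 : Module.End K V) := by
    intro c; simp [Algebra.algebraMap_eq_smul_one]
  have hzero : (Polynomial.aeval M (∏ j ∈ ({i - 1, i, i + 1} : Finset ℤ), (X - C (θ j))))
      (M' v) = 0 := by
    have hprod3 : (∏ j ∈ ({i - 1, i, i + 1} : Finset ℤ), (X - C (θ j)))
        = (X - C (θ (i - 1))) * ((X - C (θ i)) * (X - C (θ (i + 1)))) := by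
      rw [show ({i - 1, i, i + 1} : Finset ℤ)
          = insert (i - 1) (insert i {i + 1}) from rfl,
        Finset.prod_insert (by simp only [Finset.mem_insert, Finset.mem_singleton]; omega),
        Finset.prod_insert (by simp only [Finset.mem_singleton]; omega),
        Finset.prod_singleton]
    rw [hprod3, map_mul, map_mul, hXC, hXC, hXC, Module.End.mul_apply, Module.End.mul_apply]
    simp only [LinearMap.sub_apply, LinearMap.smul_apply, Module.End.one_apply,
      map_sub, map_smul, smul_smul]
    linear_combination (norm := module) hser' + h1 • (θ i • M (M' v) - M (M (M' v)))
      + h2 • (M (M' v) - θ i • M' v)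
  have hcθ : ∀ a ∈ ({i - 1, i, i + 1} : Finset ℤ), ∀ b ∈ ({i - 1, i, i + 1} : Finset ℤ),
      θ a = θ b → a = b := by
    intro a ha b hb hab
    simp only [Finset.mem_insert, Finset.mem_singleton] at ha hb
    rcases ha with rfl | rfl | rfl <;> rcases hb with rfl | rfl | rfl <;>
      first
        | rfl
        | exact absurd hab e01
        | exact absurd hab.symm e01
        | exact absurd hab e02
        | exact absurd hab.symm e02
        | exact absurd hab e12
        | exact absurd hab.symm e12
  have hmem := mem_biSup_ker_of_aeval_prod M θ ({i - 1, i, i + 1} : Finset ℤ) hcθ (M' v) hzero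
  have hsup : (⨆ j ∈ ({i - 1, i, i + 1} : Finset ℤ),
        LinearMap.ker (M - θ j • (1 : Module.End K V)))
      = LinearMap.ker (M - θ (i - 1) • (1 : Module.End K V))
        ⊔ LinearMap.ker (M - θ i • (1 : Module.End K V))
        ⊔ LinearMap.ker (M - θ (i + 1) • (1 : Module.End K V)) := by
    rw [show ({i - 1, i, i + 1} : Finset ℤ) = insert (i - 1) (insert i {i + 1}) from rfl,
      Finset.iSup_insert, Finset.iSup_insert, Finset.iSup_singleton, sup_assoc]
  rwa [hsup] at hmem


/-- Commutation of `k` past `y` for the relation `(q−q⁻¹)⁻¹(q·ky − q⁻¹·yk) = 1`. -/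
lemma hky_of_rel_m {q : K} (hq0 : q ≠ 0) (hq2ne : q - q⁻¹ ≠ 0)
    {k y : Module.End K V}
    (hrel : (q - q⁻¹)⁻¹ • (q • (k * y) - q⁻¹ • (y * k)) = 1)
    {v : V} {γ : K} (hkv : k v = γ • v) :
    k (y v) = (q⁻¹ * q⁻¹ * γ) • y v + (q⁻¹ * (q - q⁻¹)) • v := by
  have h0 := LinearMap.ext_iff.mp hrel v
  simp only [LinearMap.smul_apply, LinearMap.sub_apply, Module.End.mul_apply,
    Module.End.one_apply] at h0
  simp only [hkv, map_smul] at h0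
  have h2 := congrArg (fun x : V => (q - q⁻¹) • x) h0
  rw [smul_smul, mul_inv_cancel₀ hq2ne, one_smul] at h2
  have h3 : q • k (y v) = (q - q⁻¹) • v + q⁻¹ • (γ • y v) := by
    linear_combination (norm := module) h2
  have h4 : k (y v) = q⁻¹ • ((q - q⁻¹) • v + q⁻¹ • (γ • y v)) := by
    rw [← h3, smul_smul, inv_mul_cancel₀ hq0, one_smul]
  rw [h4]; module

/-- Commutation of `k` past `y` for the relation `(q−q⁻¹)⁻¹(q·yk − q⁻¹·ky) = 1`. -/
lemma hky_of_rel_p {q : K} (hq0 : q ≠ 0) (hq2ne : q - q⁻¹ ≠ 0)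
    {k y : Module.End K V}
    (hrel : (q - q⁻¹)⁻¹ • (q • (y * k) - q⁻¹ • (k * y)) = 1)
    {v : V} {γ : K} (hkv : k v = γ • v) :
    k (y v) = (q * q * γ) • y v + (q * (q⁻¹ - q)) • v := by
  have h0 := LinearMap.ext_iff.mp hrel v
  simp only [LinearMap.smul_apply, LinearMap.sub_apply, Module.End.mul_apply,
    Module.End.one_apply] at h0
  simp only [hkv, map_smul] at h0
  have h2 := congrArg (fun x : V => (q - q⁻¹) • x) h0
  rw [smul_smul, mul_inv_cancel₀ hq2ne, one_smul] at h2
  have h3 : q⁻¹ • k (y v) = q • (γ • y v) - (q - q⁻¹) • v := by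
    linear_combination (norm := module) -h2
  have h4 : k (y v) = q • (q • (γ • y v) - (q - q⁻¹) • v) := by
    rw [← h3, smul_smul, mul_inv_cancel₀ hq0, one_smul]
  rw [h4]; module

end Aux2
/-- on a finite dimensional irreducible `U_q(sl₂ hat)`-module of type `(1,1)`,
the pair `A = a y₁⁻, A* = a* y₀⁻` (or `A = a y₀⁺, A* = a* y₁⁺`), if irreducible as a pair,
acts as a tridiagonal pair of diameter `d` with standard eigenvalue orderings
`a q^{2i−d}` and `a* q^{d−2i}`. -/
theorem stmt16 {K : Type*} [Field K] [IsAlgClosed K]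
    {V : Type*} [AddCommGroup V] [Module K V] [FiniteDimensional K V] [Nontrivial V]
    (q : K) (hq0 : q ≠ 0) (hq : ∀ n : ℕ, 0 < n → q ^ n ≠ 1)
    (yp ym kk kkinv : Fin 2 → Module.End K V)
    (h : AlternateRelations q yp ym kk kkinv)
    (hirr : ∀ W : Submodule K V,
      (∀ i, Submodule.map (yp i) W ≤ W) → (∀ i, Submodule.map (ym i) W ≤ W) →
      (∀ i, Submodule.map (kk i) W ≤ W) → (∀ i, Submodule.map (kkinv i) W ≤ W) →
      W = ⊥ ∨ W = ⊤)
    (d : ℕ) (U : ℤ → Submodule K V) (hU : IsDecomposition d U)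
    (hk0 : ∀ i : ℤ, Submodule.map (kk 0 - q ^ (2 * i - (d : ℤ)) • 1) (U i) = ⊥)
    (hk1 : ∀ i : ℤ, Submodule.map (kk 1 - q ^ ((d : ℤ) - 2 * i) • 1) (U i) = ⊥)
    (a a' : K) (ha : a ≠ 0) (ha' : a' ≠ 0)
    (A A' : Module.End K V)
    (hAA' : (A = a • ym 1 ∧ A' = a' • ym 0) ∨ (A = a • yp 0 ∧ A' = a' • yp 1))
    (hirrAA' : ∀ W : Submodule K V, Submodule.map A W ≤ W → Submodule.map A' W ≤ W →
      W = ⊥ ∨ W = ⊤) :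
    ∃ Vs Vs' : ℤ → Submodule K V,
      IsTridiagonalPair A A' d Vs Vs'
        (fun i => a * q ^ (2 * i - (d : ℤ))) (fun i => a' * q ^ ((d : ℤ) - 2 * i)) := by
  classical
  -- ### Scalar preliminaries
  have hq2ne : q - q⁻¹ ≠ 0 := by
    intro hqq
    have h1 : q = q⁻¹ := by rwa [sub_eq_zero] at hqq
    have hq2 : q ^ 2 = 1 := by
      calc q ^ 2 = q * q := sq q
        _ = q * q⁻¹ := by rw [← h1]
        _ = 1 := mul_inv_cancel₀ hq0
    exact hq 2 (by norm_num) hq2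
  have hzpow1 : ∀ n : ℤ, q ^ n = 1 → n = 0 := by
    intro n hn
    rcases lt_trichotomy n 0 with hlt | rfl | hgt
    · have h1 : q ^ (-n) = 1 := by rw [zpow_neg, hn, inv_one]
      have h2 : q ^ ((-n).toNat) = 1 := by
        rw [← zpow_natCast, Int.toNat_of_nonneg (by omega)]; exact h1
      exact absurd h2 (hq (-n).toNat (by omega))
    · rfl
    · have h2 : q ^ (n.toNat) = 1 := by
        rw [← zpow_natCast, Int.toNat_of_nonneg (by omega)]; exact hn
      exact absurd h2 (hq n.toNat (by omega))
  have hzpow : ∀ m n : ℤ, q ^ m = q ^ n → m = n := by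
    intro m n hmn
    have h1 : q ^ (m - n) = 1 := by
      rw [zpow_sub₀ hq0, hmn, div_self (zpow_ne_zero _ hq0)]
    have := hzpow1 _ h1; omega
  have hzadd : ∀ m n : ℤ, q ^ (m + n) = q ^ m * q ^ n := fun m n => zpow_add₀ hq0 m n
  have hq3 : qInt q 3 = q ^ (2 : ℤ) + 1 + q ^ (-2 : ℤ) := by
    rw [qInt, div_eq_iff hq2ne]
    have e3 : q ^ (3 : ℤ) = q ^ (3 : ℕ) := by norm_cast
    have e3' : q ^ (-3 : ℤ) = (q ^ (3 : ℕ))⁻¹ := by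
      rw [← e3, ← zpow_neg]
    have e2 : q ^ (2 : ℤ) = q ^ (2 : ℕ) := by norm_cast
    have e2' : q ^ (-2 : ℤ) = (q ^ (2 : ℕ))⁻¹ := by
      rw [← e2, ← zpow_neg]
    rw [e3, e3', e2, e2']
    field_simp
    ring
  have hqm2 : q ^ (2 : ℤ) * q ^ (-2 : ℤ) = 1 := by
    rw [← hzadd, show (2 : ℤ) + (-2 : ℤ) = 0 by ring, zpow_zero]
  -- eigenvalue bookkeeping
  have hθup : ∀ i : ℤ, a * q ^ (2 * (i + 1) - (d : ℤ))
      = q ^ (2 : ℤ) * (a * q ^ (2 * i - (d : ℤ))) := by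
    intro i
    rw [show 2 * (i + 1) - (d : ℤ) = 2 + (2 * i - (d : ℤ)) by ring, hzadd]; ring
  have hθdn : ∀ i : ℤ, a * q ^ (2 * (i - 1) - (d : ℤ))
      = q ^ (-2 : ℤ) * (a * q ^ (2 * i - (d : ℤ))) := by
    intro i
    rw [show 2 * (i - 1) - (d : ℤ) = -2 + (2 * i - (d : ℤ)) by ring, hzadd]; ring
  have hθ'up : ∀ i : ℤ, a' * q ^ ((d : ℤ) - 2 * (i + 1))
      = q ^ (-2 : ℤ) * (a' * q ^ ((d : ℤ) - 2 * i)) := by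
    intro i
    rw [show (d : ℤ) - 2 * (i + 1) = -2 + ((d : ℤ) - 2 * i) by ring, hzadd]; ring
  have hθ'dn : ∀ i : ℤ, a' * q ^ ((d : ℤ) - 2 * (i - 1))
      = q ^ (2 : ℤ) * (a' * q ^ ((d : ℤ) - 2 * i)) := by
    intro i
    rw [show (d : ℤ) - 2 * (i - 1) = 2 + ((d : ℤ) - 2 * i) by ring, hzadd]; ring
  have hinj1 : ∀ b : K, b ≠ 0 → Function.Injective (fun i : ℤ => b * q ^ (2 * i - (d : ℤ))) := by
    intro b hb m n hmn
    simp only at hmn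
    have h1 := mul_left_cancel₀ hb hmn
    have := hzpow _ _ h1; omega
  have hinj2 : ∀ b : K, b ≠ 0 → Function.Injective (fun i : ℤ => b * q ^ ((d : ℤ) - 2 * i)) := by
    intro b hb m n hmn
    simp only at hmn
    have h1 := mul_left_cancel₀ hb hmn
    have := hzpow _ _ h1; omega
  have hθinj := hinj1 a ha
  have hθ'inj := hinj2 a' ha'
  -- the two scalar identities feeding the Serre tridiagonality lemma
  have hth1 : ∀ i : ℤ, (a * q ^ (2 * (i - 1) - (d : ℤ))) + (a * q ^ (2 * (i + 1) - (d : ℤ)))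
      = (qInt q 3 - 1) * (a * q ^ (2 * i - (d : ℤ))) := by
    intro i; rw [hθdn, hθup, hq3]; ring
  have hth2 : ∀ i : ℤ, (a * q ^ (2 * (i - 1) - (d : ℤ))) * (a * q ^ (2 * (i + 1) - (d : ℤ)))
      = (a * q ^ (2 * i - (d : ℤ))) ^ 2 := by
    intro i
    rw [hθdn, hθup]
    calc (q ^ (-2 : ℤ) * (a * q ^ (2 * i - (d : ℤ)))) * (q ^ (2 : ℤ) * (a * q ^ (2 * i - (d : ℤ))))
        = (q ^ (2 : ℤ) * q ^ (-2 : ℤ)) * (a * q ^ (2 * i - (d : ℤ))) ^ 2 := by ring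
      _ = _ := by rw [hqm2, one_mul]
  have hth1' : ∀ i : ℤ, (a' * q ^ ((d : ℤ) - 2 * (i - 1))) + (a' * q ^ ((d : ℤ) - 2 * (i + 1)))
      = (qInt q 3 - 1) * (a' * q ^ ((d : ℤ) - 2 * i)) := by
    intro i; rw [hθ'dn, hθ'up, hq3]; ring
  have hth2' : ∀ i : ℤ, (a' * q ^ ((d : ℤ) - 2 * (i - 1))) * (a' * q ^ ((d : ℤ) - 2 * (i + 1)))
      = (a' * q ^ ((d : ℤ) - 2 * i)) ^ 2 := by
    intro i
    rw [hθ'dn, hθ'up]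
    calc (q ^ (2 : ℤ) * (a' * q ^ ((d : ℤ) - 2 * i))) * (q ^ (-2 : ℤ) * (a' * q ^ ((d : ℤ) - 2 * i)))
        = (q ^ (2 : ℤ) * q ^ (-2 : ℤ)) * (a' * q ^ ((d : ℤ) - 2 * i)) ^ 2 := by ring
      _ = _ := by rw [hqm2, one_mul]
  -- ### The action of `k₀, k₁` on the weight spaces
  have hk0' : ∀ i : ℤ, ∀ v ∈ U i, kk 0 v = q ^ (2 * i - (d : ℤ)) • v := by
    intro i v hv
    have h2 : (kk 0 - q ^ (2 * i - (d : ℤ)) • 1) v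
        ∈ Submodule.map (kk 0 - q ^ (2 * i - (d : ℤ)) • 1) (U i) :=
      Submodule.mem_map_of_mem hv
    rw [hk0 i] at h2
    have h3 := (Submodule.mem_bot K).mp h2
    rwa [LinearMap.sub_apply, LinearMap.smul_apply, Module.End.one_apply, sub_eq_zero] at h3
  have hk1' : ∀ i : ℤ, ∀ v ∈ U i, kk 1 v = q ^ ((d : ℤ) - 2 * i) • v := by
    intro i v hv
    have h2 : (kk 1 - q ^ ((d : ℤ) - 2 * i) • 1) v
        ∈ Submodule.map (kk 1 - q ^ ((d : ℤ) - 2 * i) • 1) (U i) :=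
      Submodule.mem_map_of_mem hv
    rw [hk1 i] at h2
    have h3 := (Submodule.mem_bot K).mp h2
    rwa [LinearMap.sub_apply, LinearMap.smul_apply, Module.End.one_apply, sub_eq_zero] at h3
  have hc0inj : Function.Injective (fun i : ℤ => q ^ (2 * i - (d : ℤ))) := by
    intro m n hmn; simp only at hmn; have := hzpow _ _ hmn; omega
  have hc1inj : Function.Injective (fun i : ℤ => q ^ ((d : ℤ) - 2 * i)) := by
    intro m n hmn; simp only at hmn; have := hzpow _ _ hmn; omega
  have hker0 : ∀ j : ℤ,
      LinearMap.ker (kk 0 - q ^ (2 * j - (d : ℤ)) • (1 : Module.End K V)) = U j :=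
    fun j => ker_eq_of_decomp hU hc0inj hk0' j
  have hker1 : ∀ j : ℤ,
      LinearMap.ker (kk 1 - q ^ ((d : ℤ) - 2 * j) • (1 : Module.End K V)) = U j :=
    fun j => ker_eq_of_decomp hU hc1inj hk1' j
  -- ### Case analysis
  rcases hAA' with ⟨hA1, hA'1⟩ | ⟨hA1, hA'1⟩
  · -- Case `A = a • ym 1`, `A' = a' • ym 0`
    have hraiseA : ∀ i : ℤ, ∀ v ∈ U i,
        A v - (a * q ^ (2 * i - (d : ℤ))) • v ∈ U (i + 1) := by
      intro i v hv
      have hkv : kk 1 v = q ^ ((d : ℤ) - 2 * i) • v := hk1' i v hv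
      have hky := hky_of_rel_m hq0 hq2ne (h.rel_k_ym 1) hkv
      have hws := weight_shift (δ := q ^ (2 * i - (d : ℤ))) hky hkv (by
        have hm1 : q ^ (2 * i - (d : ℤ)) * q ^ ((d : ℤ) - 2 * i) = 1 := by
          rw [← hzadd, show (2 * i - (d : ℤ)) + ((d : ℤ) - 2 * i) = 0 by ring, zpow_zero]
        have expand : q ^ (2 * i - (d : ℤ))
              * (q ^ ((d : ℤ) - 2 * i) - q⁻¹ * q⁻¹ * q ^ ((d : ℤ) - 2 * i))
            = (q ^ (2 * i - (d : ℤ)) * q ^ ((d : ℤ) - 2 * i)) * (1 - q⁻¹ * q⁻¹) := by ring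
        rw [expand, hm1, one_mul]
        field_simp)
      have he : q⁻¹ * q⁻¹ * q ^ ((d : ℤ) - 2 * i) = q ^ ((d : ℤ) - 2 * (i + 1)) := by
        rw [show (d : ℤ) - 2 * (i + 1) = (-1) + ((-1) + ((d : ℤ) - 2 * i)) by ring,
          hzadd, hzadd, zpow_neg_one]
        ring
      rw [he] at hws
      have hmem : ym 1 v - q ^ (2 * i - (d : ℤ)) • v ∈ U (i + 1) := by
        rw [← hker1 (i + 1), LinearMap.mem_ker, LinearMap.sub_apply, LinearMap.smul_apply,
          Module.End.one_apply, sub_eq_zero]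
        exact hws
      have hAv : A v - (a * q ^ (2 * i - (d : ℤ))) • v
          = a • (ym 1 v - q ^ (2 * i - (d : ℤ)) • v) := by
        rw [hA1]; simp only [LinearMap.smul_apply, smul_sub, smul_smul]
      rw [hAv]; exact Submodule.smul_mem _ _ hmem
    have hraiseA' : ∀ i : ℤ, ∀ v ∈ U ((d : ℤ) - i),
        A' v - (a' * q ^ (2 * i - (d : ℤ))) • v ∈ U ((d : ℤ) - (i + 1)) := by
      intro i v hv
      have hkv : kk 0 v = q ^ (2 * ((d : ℤ) - i) - (d : ℤ)) • v := hk0' ((d : ℤ) - i) v hv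
      have hky := hky_of_rel_m hq0 hq2ne (h.rel_k_ym 0) hkv
      have hws := weight_shift (δ := q ^ (2 * i - (d : ℤ))) hky hkv (by
        have hm1 : q ^ (2 * i - (d : ℤ)) * q ^ (2 * ((d : ℤ) - i) - (d : ℤ)) = 1 := by
          rw [← hzadd, show (2 * i - (d : ℤ)) + (2 * ((d : ℤ) - i) - (d : ℤ)) = 0 by ring,
            zpow_zero]
        have expand : q ^ (2 * i - (d : ℤ))
              * (q ^ (2 * ((d : ℤ) - i) - (d : ℤ)) - q⁻¹ * q⁻¹ * q ^ (2 * ((d : ℤ) - i) - (d : ℤ)))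
            = (q ^ (2 * i - (d : ℤ)) * q ^ (2 * ((d : ℤ) - i) - (d : ℤ))) * (1 - q⁻¹ * q⁻¹) := by
          ring
        rw [expand, hm1, one_mul]
        field_simp)
      have he : q⁻¹ * q⁻¹ * q ^ (2 * ((d : ℤ) - i) - (d : ℤ))
          = q ^ (2 * ((d : ℤ) - (i + 1)) - (d : ℤ)) := by
        rw [show 2 * ((d : ℤ) - (i + 1)) - (d : ℤ)
            = (-1) + ((-1) + (2 * ((d : ℤ) - i) - (d : ℤ))) by ring,
          hzadd, hzadd, zpow_neg_one]
        ring
      rw [he] at hws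
      have hmem : ym 0 v - q ^ (2 * i - (d : ℤ)) • v ∈ U ((d : ℤ) - (i + 1)) := by
        rw [← hker0 ((d : ℤ) - (i + 1)), LinearMap.mem_ker, LinearMap.sub_apply,
          LinearMap.smul_apply, Module.End.one_apply, sub_eq_zero]
        exact hws
      have hAv : A' v - (a' * q ^ (2 * i - (d : ℤ))) • v
          = a' • (ym 0 v - q ^ (2 * i - (d : ℤ)) • v) := by
        rw [hA'1]; simp only [LinearMap.smul_apply, smul_sub, smul_smul]
      rw [hAv]; exact Submodule.smul_mem _ _ hmem
    have hdecA : IsDecomposition d (fun i : ℤ =>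
        LinearMap.ker (A - (a * q ^ (2 * i - (d : ℤ))) • (1 : Module.End K V))) :=
      pkg hU hraiseA hθinj
    have hdecA'pre : IsDecomposition d (fun i : ℤ =>
        LinearMap.ker (A' - (a' * q ^ (2 * i - (d : ℤ))) • (1 : Module.End K V))) :=
      pkg hU.relabel hraiseA' (hinj1 a' ha')
    have hdecA' : IsDecomposition d (fun i : ℤ =>
        LinearMap.ker (A' - (a' * q ^ ((d : ℤ) - 2 * i)) • (1 : Module.End K V))) := by
      have h5 := hdecA'pre.relabel
      have h6 : ∀ i : ℤ, 2 * ((d : ℤ) - i) - (d : ℤ) = (d : ℤ) - 2 * i := fun i => by ring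
      simpa only [h6] using h5
    have hserA : A ^ 3 * A' - qInt q 3 • (A ^ 2 * A' * A)
        + qInt q 3 • (A * A' * A ^ 2) - A' * A ^ 3 = 0 := by
      rw [hA1, hA'1]
      exact serre_smul (h.serre_m 1 0 (by decide))
    have hserA' : A' ^ 3 * A - qInt q 3 • (A' ^ 2 * A * A')
        + qInt q 3 • (A' * A * A' ^ 2) - A * A' ^ 3 = 0 := by
      rw [hA1, hA'1]
      exact serre_smul (h.serre_m 0 1 (by decide))
    refine ⟨fun i : ℤ => LinearMap.ker (A - (a * q ^ (2 * i - (d : ℤ))) • (1 : Module.End K V)),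
      fun i : ℤ => LinearMap.ker (A' - (a' * q ^ ((d : ℤ) - 2 * i)) • (1 : Module.End K V)),
      hdecA, hdecA', ?_, ?_, ?_, ?_, ?_, ?_, hirrAA'⟩
    · intro i v hv
      have h7 := LinearMap.mem_ker.mp hv
      rwa [LinearMap.sub_apply, LinearMap.smul_apply, Module.End.one_apply, sub_eq_zero] at h7
    · intro i v hv
      have h7 := LinearMap.mem_ker.mp hv
      rwa [LinearMap.sub_apply, LinearMap.smul_apply, Module.End.one_apply, sub_eq_zero] at h7
    · intro i j _ _ _ _ hij
      exact hθinj hij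
    · intro i j _ _ _ _ hij
      exact hθ'inj hij
    · intro i
      exact trid_of_serre (θ := fun i : ℤ => a * q ^ (2 * i - (d : ℤ))) i hserA
        (hth1 i) (hth2 i)
        (fun hh => by have := hθinj hh; omega)
        (fun hh => by have := hθinj hh; omega)
        (fun hh => by have := hθinj hh; omega)
    · intro i
      exact trid_of_serre (θ := fun i : ℤ => a' * q ^ ((d : ℤ) - 2 * i)) i hserA'
        (hth1' i) (hth2' i)
        (fun hh => by have := hθ'inj hh; omega)
        (fun hh => by have := hθ'inj hh; omega)
        (fun hh => by have := hθ'inj hh; omega)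
  · -- Case `A = a • yp 0`, `A' = a' • yp 1`
    have hraiseA : ∀ i : ℤ, ∀ v ∈ U i,
        A v - (a * q ^ ((d : ℤ) - 2 * i)) • v ∈ U (i + 1) := by
      intro i v hv
      have hkv : kk 0 v = q ^ (2 * i - (d : ℤ)) • v := hk0' i v hv
      have hky := hky_of_rel_p hq0 hq2ne (h.rel_yp_k 0) hkv
      have hws := weight_shift (δ := q ^ ((d : ℤ) - 2 * i)) hky hkv (by
        have hm1 : q ^ ((d : ℤ) - 2 * i) * q ^ (2 * i - (d : ℤ)) = 1 := by
          rw [← hzadd, show ((d : ℤ) - 2 * i) + (2 * i - (d : ℤ)) = 0 by ring, zpow_zero]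
        have expand : q ^ ((d : ℤ) - 2 * i)
              * (q ^ (2 * i - (d : ℤ)) - q * q * q ^ (2 * i - (d : ℤ)))
            = (q ^ ((d : ℤ) - 2 * i) * q ^ (2 * i - (d : ℤ))) * (1 - q * q) := by ring
        rw [expand, hm1, one_mul]
        field_simp)
      have he : q * q * q ^ (2 * i - (d : ℤ)) = q ^ (2 * (i + 1) - (d : ℤ)) := by
        rw [show 2 * (i + 1) - (d : ℤ) = 1 + (1 + (2 * i - (d : ℤ))) by ring,
          hzadd, hzadd, zpow_one]
        ring
      rw [he] at hws
      have hmem : yp 0 v - q ^ ((d : ℤ) - 2 * i) • v ∈ U (i + 1) := by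
        rw [← hker0 (i + 1), LinearMap.mem_ker, LinearMap.sub_apply, LinearMap.smul_apply,
          Module.End.one_apply, sub_eq_zero]
        exact hws
      have hAv : A v - (a * q ^ ((d : ℤ) - 2 * i)) • v
          = a • (yp 0 v - q ^ ((d : ℤ) - 2 * i) • v) := by
        rw [hA1]; simp only [LinearMap.smul_apply, smul_sub, smul_smul]
      rw [hAv]; exact Submodule.smul_mem _ _ hmem
    have hraiseA' : ∀ i : ℤ, ∀ v ∈ U ((d : ℤ) - i),
        A' v - (a' * q ^ ((d : ℤ) - 2 * i)) • v ∈ U ((d : ℤ) - (i + 1)) := by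
      intro i v hv
      have hkv : kk 1 v = q ^ ((d : ℤ) - 2 * ((d : ℤ) - i)) • v := hk1' ((d : ℤ) - i) v hv
      have hky := hky_of_rel_p hq0 hq2ne (h.rel_yp_k 1) hkv
      have hws := weight_shift (δ := q ^ ((d : ℤ) - 2 * i)) hky hkv (by
        have hm1 : q ^ ((d : ℤ) - 2 * i) * q ^ ((d : ℤ) - 2 * ((d : ℤ) - i)) = 1 := by
          rw [← hzadd, show ((d : ℤ) - 2 * i) + ((d : ℤ) - 2 * ((d : ℤ) - i)) = 0 by ring,
            zpow_zero]
        have expand : q ^ ((d : ℤ) - 2 * i)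
              * (q ^ ((d : ℤ) - 2 * ((d : ℤ) - i)) - q * q * q ^ ((d : ℤ) - 2 * ((d : ℤ) - i)))
            = (q ^ ((d : ℤ) - 2 * i) * q ^ ((d : ℤ) - 2 * ((d : ℤ) - i))) * (1 - q * q) := by
          ring
        rw [expand, hm1, one_mul]
        field_simp)
      have he : q * q * q ^ ((d : ℤ) - 2 * ((d : ℤ) - i))
          = q ^ ((d : ℤ) - 2 * ((d : ℤ) - (i + 1))) := by
        rw [show (d : ℤ) - 2 * ((d : ℤ) - (i + 1))
            = 1 + (1 + ((d : ℤ) - 2 * ((d : ℤ) - i))) by ring,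
          hzadd, hzadd, zpow_one]
        ring
      rw [he] at hws
      have hmem : yp 1 v - q ^ ((d : ℤ) - 2 * i) • v ∈ U ((d : ℤ) - (i + 1)) := by
        rw [← hker1 ((d : ℤ) - (i + 1)), LinearMap.mem_ker, LinearMap.sub_apply,
          LinearMap.smul_apply, Module.End.one_apply, sub_eq_zero]
        exact hws
      have hAv : A' v - (a' * q ^ ((d : ℤ) - 2 * i)) • v
          = a' • (yp 1 v - q ^ ((d : ℤ) - 2 * i) • v) := by
        rw [hA'1]; simp only [LinearMap.smul_apply, smul_sub, smul_smul]
      rw [hAv]; exact Submodule.smul_mem _ _ hmem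
    have hdecApre : IsDecomposition d (fun i : ℤ =>
        LinearMap.ker (A - (a * q ^ ((d : ℤ) - 2 * i)) • (1 : Module.End K V))) :=
      pkg hU hraiseA (hinj2 a ha)
    have hdecA : IsDecomposition d (fun i : ℤ =>
        LinearMap.ker (A - (a * q ^ (2 * i - (d : ℤ))) • (1 : Module.End K V))) := by
      have h5 := hdecApre.relabel
      have h6 : ∀ i : ℤ, (d : ℤ) - 2 * ((d : ℤ) - i) = 2 * i - (d : ℤ) := fun i => by ring
      simpa only [h6] using h5
    have hdecA' : IsDecomposition d (fun i : ℤ =>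
        LinearMap.ker (A' - (a' * q ^ ((d : ℤ) - 2 * i)) • (1 : Module.End K V))) :=
      pkg hU.relabel hraiseA' hθ'inj
    have hserA : A ^ 3 * A' - qInt q 3 • (A ^ 2 * A' * A)
        + qInt q 3 • (A * A' * A ^ 2) - A' * A ^ 3 = 0 := by
      rw [hA1, hA'1]
      exact serre_smul (h.serre_p 0 1 (by decide))
    have hserA' : A' ^ 3 * A - qInt q 3 • (A' ^ 2 * A * A')
        + qInt q 3 • (A' * A * A' ^ 2) - A * A' ^ 3 = 0 := by
      rw [hA1, hA'1]
      exact serre_smul (h.serre_p 1 0 (by decide))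
    refine ⟨fun i : ℤ => LinearMap.ker (A - (a * q ^ (2 * i - (d : ℤ))) • (1 : Module.End K V)),
      fun i : ℤ => LinearMap.ker (A' - (a' * q ^ ((d : ℤ) - 2 * i)) • (1 : Module.End K V)),
      hdecA, hdecA', ?_, ?_, ?_, ?_, ?_, ?_, hirrAA'⟩
    · intro i v hv
      have h7 := LinearMap.mem_ker.mp hv
      rwa [LinearMap.sub_apply, LinearMap.smul_apply, Module.End.one_apply, sub_eq_zero] at h7
    · intro i v hv
      have h7 := LinearMap.mem_ker.mp hv
      rwa [LinearMap.sub_apply, LinearMap.smul_apply, Module.End.one_apply, sub_eq_zero] at h7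
    · intro i j _ _ _ _ hij
      exact hθinj hij
    · intro i j _ _ _ _ hij
      exact hθ'inj hij
    · intro i
      exact trid_of_serre (θ := fun i : ℤ => a * q ^ (2 * i - (d : ℤ))) i hserA
        (hth1 i) (hth2 i)
        (fun hh => by have := hθinj hh; omega)
        (fun hh => by have := hθinj hh; omega)
        (fun hh => by have := hθinj hh; omega)
    · intro i
      exact trid_of_serre (θ := fun i : ℤ => a' * q ^ ((d : ℤ) - 2 * i)) i hserA'
        (hth1' i) (hth2' i)
        (fun hh => by have := hθ'inj hh; omega)
        (fun hh => by have := hθ'inj hh; omega)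
        (fun hh => by have := hθ'inj hh; omega)
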